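/- Let c = √(√5+2) and r = √(√5+1). The spherical inversion of ℝ³ given by q ↦ r²·(q - (c,0,0))/‖q - (c,0,0)‖² + (c,0,0) maps the open unit ball of ℝ³ onto itself. -/

import Mathlib

open EuclideanGeometry in
/-- In a real inner product space, if `‖c‖² = 1 + R²`, then
`‖inversion c R x‖² - 1 = (R²/‖x-c‖²) * (‖x‖² - 1)`. -/
lemma inversion_norm_sq_sub_one {E : Type*} [NormedAddCommGroup E] [InnerProductSpace ℝ E]
    {c x : E} {R : ℝ} (hc : ‖c‖ ^ 2 = 1 + R ^ 2) (hx : x ≠ c) :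
    ‖inversion c R x‖ ^ 2 - 1 = (R ^ 2 / ‖x - c‖ ^ 2) * (‖x‖ ^ 2 - 1) := by
  have hd : ‖x - c‖ ^ 2 ≠ 0 :=
    pow_ne_zero 2 (norm_ne_zero_iff.mpr (sub_ne_zero.mpr hx))
  have h1 : ‖inversion c R x‖ ^ 2 =
      ((R / ‖x - c‖) ^ 2) ^ 2 * ‖x - c‖ ^ 2
        + 2 * ((R / ‖x - c‖) ^ 2) * inner ℝ (x - c) c + ‖c‖ ^ 2 := by
    rw [inversion, vadd_eq_add, vsub_eq_sub, @norm_add_sq_real, norm_smul,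
      real_inner_smul_left, dist_eq_norm, Real.norm_eq_abs, mul_pow, sq_abs]
    ring
  have h2 : ‖x - c‖ ^ 2 = ‖x‖ ^ 2 - 2 * inner ℝ x c + ‖c‖ ^ 2 := norm_sub_sq_real x c
  have h3 : (inner ℝ (x - c) c : ℝ) = inner ℝ x c - ‖c‖ ^ 2 := by
    rw [inner_sub_left, real_inner_self_eq_norm_sq]
  have ha : (R ^ 2 / ‖x - c‖ ^ 2) * ‖x - c‖ ^ 2 = R ^ 2 := div_mul_cancel₀ _ hd
  rw [h1, h3, div_pow]
  rw [hc] at h2 ⊢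
  linear_combination (R ^ 2 / ‖x - c‖ ^ 2 - 1) * ha + (R ^ 2 / ‖x - c‖ ^ 2) * h2

/-- With c = √(√5+2) and r = √(√5+1), the spherical inversion
q ↦ r²(q-(c,0,0))/‖q-(c,0,0)‖² + (c,0,0) maps the open unit ball of ℝ³ onto itself. -/
theorem inversion_maps_ball :
    (fun q : EuclideanSpace ℝ (Fin 3) =>
        ((Real.sqrt (Real.sqrt 5 + 1))^2 /
            ‖q - (WithLp.equiv 2 (Fin 3 → ℝ)).symm ![Real.sqrt (Real.sqrt 5 + 2), 0, 0]‖^2) •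
          (q - (WithLp.equiv 2 (Fin 3 → ℝ)).symm ![Real.sqrt (Real.sqrt 5 + 2), 0, 0]) +
        (WithLp.equiv 2 (Fin 3 → ℝ)).symm ![Real.sqrt (Real.sqrt 5 + 2), 0, 0]) ''
      Metric.ball 0 1 = Metric.ball 0 1 := by
  set R : ℝ := Real.sqrt (Real.sqrt 5 + 1) with hR
  set c : EuclideanSpace ℝ (Fin 3) :=
    (WithLp.equiv 2 (Fin 3 → ℝ)).symm ![Real.sqrt (Real.sqrt 5 + 2), 0, 0] with hcdef
  have h5 : (0:ℝ) ≤ Real.sqrt 5 := Real.sqrt_nonneg 5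
  have hR2 : R ^ 2 = Real.sqrt 5 + 1 := Real.sq_sqrt (by linarith)
  have hRpos : 0 < R := Real.sqrt_pos.mpr (by linarith)
  have hcnorm : ‖c‖ ^ 2 = 1 + R ^ 2 := by
    have h52 : (0:ℝ) ≤ Real.sqrt 5 + 2 := by linarith
    have : ‖c‖ ^ 2 = Real.sqrt 5 + 2 := by
      rw [hcdef, EuclideanSpace.norm_eq, Real.sq_sqrt (by positivity)]
      simp [Fin.sum_univ_three, sq_abs, Real.sq_sqrt h52]
    rw [this, hR2]; ring
  have hcgt : 1 < ‖c‖ := by nlinarith [norm_nonneg c]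
  -- the map equals inversion c R
  have hfun : (fun q : EuclideanSpace ℝ (Fin 3) =>
        (R ^ 2 / ‖q - c‖ ^ 2) • (q - c) + c) = EuclideanGeometry.inversion c R := by
    funext q
    rw [EuclideanGeometry.inversion, vadd_eq_add, vsub_eq_sub, dist_eq_norm, div_pow]
  have hne : ∀ x : EuclideanSpace ℝ (Fin 3), ‖x‖ < 1 → x ≠ c := by
    intro x hx h; rw [h] at hx; linarith
  have key : ∀ x : EuclideanSpace ℝ (Fin 3), ‖x‖ < 1 →
      ‖EuclideanGeometry.inversion c R x‖ < 1 := by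
    intro x hx
    have hxc := hne x hx
    have h := inversion_norm_sq_sub_one hcnorm hxc
    have hd : 0 < ‖x - c‖ ^ 2 :=
      pow_pos (norm_pos_iff.mpr (sub_ne_zero.mpr hxc)) 2
    have hx2 : ‖x‖ ^ 2 - 1 < 0 := by nlinarith [norm_nonneg x]
    have hfrac : 0 < R ^ 2 / ‖x - c‖ ^ 2 := by positivity
    have : ‖EuclideanGeometry.inversion c R x‖ ^ 2 < 1 := by nlinarith
    nlinarith [norm_nonneg (EuclideanGeometry.inversion c R x)]
  rw [hfun]
  ext y
  simp only [Set.mem_image, Metric.mem_ball, dist_zero_right]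
  constructor
  · rintro ⟨x, hx, rfl⟩
    exact key x hx
  · intro hy
    refine ⟨EuclideanGeometry.inversion c R y, key y hy, ?_⟩
    exact EuclideanGeometry.inversion_inversion c hRpos.ne' y
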